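/- Let R be a symmetric positive definite k×k real matrix, let i₀ ∈ {1,…,k}, and for each i ≠ i₀ let A_i ⊆ ℝ be a Borel set. Then the function λ ↦ ∫_{ℝ^k} 1_{(−∞,−λ)}(x_{i₀}) · ∏_{i≠i₀} 1_{A_i}(x_i) · φ_R(x) dx is differentiable on ℝ, with derivative at λ equal to −∫_{ℝ^{k−1}} ∏_{i≠i₀} 1_{A_i}(x_i) · φ_R(x₁,…,x_{i₀−1}, −λ, x_{i₀+1},…,x_k) dx̄, where dx̄ denotes integration over the coordinates (x_i)_{i≠i₀}. -/

import Mathlib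

open MeasureTheory Real Matrix

/-- The centered Gaussian density on `ℝ^k` with covariance matrix `R`:
`φ_R(x) = ((2π)^k det R)^{-1/2} exp(−(1/2) xᵀ R⁻¹ x)`. -/
noncomputable def gaussDensity {k : ℕ} (R : Matrix (Fin k) (Fin k) ℝ) (x : Fin k → ℝ) : ℝ :=
  (Real.sqrt ((2 * Real.pi) ^ k * R.det))⁻¹ * Real.exp (-(1 / 2) * (x ⬝ᵥ R⁻¹ *ᵥ x))

lemma quad_lower_bound {k : ℕ} (hk : 0 < k) {M : Matrix (Fin k) (Fin k) ℝ} (hM : M.PosDef) :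
    ∃ c > 0, ∀ x : Fin k → ℝ, c * (x ⬝ᵥ x) ≤ x ⬝ᵥ M *ᵥ x := by
  classical
  set Q : (Fin k → ℝ) → ℝ := fun x => x ⬝ᵥ M *ᵥ x with hQ
  have hQcont : Continuous Q := by
    unfold Q
    simp only [dotProduct, mulVec]
    exact continuous_finset_sum _ fun i _ =>
      (continuous_apply i).mul (continuous_finset_sum _ fun j _ =>
        continuous_const.mul (continuous_apply j))
  set S : Set (Fin k → ℝ) := {x | x ⬝ᵥ x = 1} with hS
  have hclosed : IsClosed S := by
    have : Continuous fun x : Fin k → ℝ => x ⬝ᵥ x := by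
      simp only [dotProduct]
      exact continuous_finset_sum _ fun i _ => (continuous_apply i).mul (continuous_apply i)
    exact isClosed_eq this continuous_const
  have hbdd : Bornology.IsBounded S := by
    apply Bornology.IsBounded.subset (Metric.isBounded_closedBall (x := (0 : Fin k → ℝ)) (r := 1))
    intro x hx
    simp only [Metric.mem_closedBall, dist_zero_right]
    rw [pi_norm_le_iff_of_nonneg zero_le_one]
    intro i
    have h1 : x i * x i ≤ 1 := by
      have hxx : ∑ j, x j * x j = 1 := hx
      calc x i * x i ≤ ∑ j, x j * x j := Finset.single_le_sum (f := fun j => x j * x j)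
            (fun j _ => mul_self_nonneg _) (Finset.mem_univ i)
        _ = 1 := hxx
    rw [Real.norm_eq_abs]
    exact abs_le_one_iff_mul_self_le_one.mpr h1
  have hScompact : IsCompact S := Metric.isCompact_of_isClosed_isBounded hclosed hbdd
  have hSne : S.Nonempty := by
    refine ⟨Pi.single ⟨0, hk⟩ 1, ?_⟩
    simp only [hS, Set.mem_setOf_eq, dotProduct]
    rw [Finset.sum_eq_single ⟨0, hk⟩]
    · simp
    · intro b _ hb; simp [Pi.single_apply, hb]
    · simp
  obtain ⟨x₀, hx₀S, hx₀min⟩ := hScompact.exists_isMinOn hSne hQcont.continuousOn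
  have hx₀ne : x₀ ≠ 0 := by
    intro h
    rw [h] at hx₀S
    simp [hS, Set.mem_setOf_eq] at hx₀S
  refine ⟨Q x₀, hM.dotProduct_mulVec_pos hx₀ne, fun x => ?_⟩
  rcases eq_or_ne x 0 with rfl | hx
  · simp [Q]
  · have hxx : 0 < x ⬝ᵥ x := by
      obtain ⟨i, hi⟩ := Function.ne_iff.mp hx
      apply Finset.sum_pos' (fun j _ => mul_self_nonneg _)
      refine ⟨i, Finset.mem_univ i, ?_⟩
      have : x i ≠ 0 := by simpa using hi
      exact (mul_self_nonneg _).lt_of_ne' (by simpa [mul_self_eq_zero] using this)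
    set t : ℝ := Real.sqrt (x ⬝ᵥ x) with ht
    have htpos : 0 < t := Real.sqrt_pos.mpr hxx
    have hy : (t⁻¹ • x) ∈ S := by
      simp only [hS, Set.mem_setOf_eq, smul_dotProduct, dotProduct_smul, smul_eq_mul]
      rw [← mul_assoc, ← mul_inv, ht, Real.mul_self_sqrt hxx.le]
      exact inv_mul_cancel₀ hxx.ne'
    have hmin : Q x₀ ≤ Q (t⁻¹ • x) := hx₀min hy
    have hQy : Q (t⁻¹ • x) = t⁻¹ * t⁻¹ * Q x := by
      simp only [hQ, smul_dotProduct, mulVec_smul, dotProduct_smul, smul_eq_mul]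
      ring
    rw [hQy] at hmin
    have htt : t * t = x ⬝ᵥ x := Real.mul_self_sqrt hxx.le
    calc Q x₀ * (x ⬝ᵥ x) = (t * t) * Q x₀ := by rw [htt]; ring
      _ ≤ (t * t) * (t⁻¹ * t⁻¹ * Q x) := by
          apply mul_le_mul_of_nonneg_left hmin (by positivity)
      _ = Q x := by field_simp

lemma integrable_exp_neg_mul_sum_sq {ι : Type*} [Fintype ι] {b : ℝ} (hb : 0 < b) :
    Integrable (fun v : ι → ℝ => Real.exp (-b * ∑ i, (v i) ^ 2)) := by
  have h := GaussianFourier.integrable_cexp_neg_mul_sum_add (b := (b : ℂ))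
    (by simpa using hb) (fun _ : ι => 0)
  apply h.norm.congr
  filter_upwards with v
  have : (-(b:ℂ) * ∑ i : ι, (v i : ℂ) ^ 2 + ∑ i : ι, (0:ℂ) * (v i : ℂ))
      = ((-b * ∑ i, (v i)^2 : ℝ) : ℂ) := by
    simp only [zero_mul, Finset.sum_const_zero, add_zero]
    push_cast
    ring
  rw [this, Complex.norm_exp, Complex.ofReal_re]

lemma continuous_quadForm {k : ℕ} (M : Matrix (Fin k) (Fin k) ℝ) :
    Continuous fun x : Fin k → ℝ => x ⬝ᵥ M *ᵥ x := by
  simp only [dotProduct, mulVec]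
  exact continuous_finset_sum _ fun i _ =>
    (continuous_apply i).mul (continuous_finset_sum _ fun j _ =>
      continuous_const.mul (continuous_apply j))

lemma continuous_gaussDensity {k : ℕ} (R : Matrix (Fin k) (Fin k) ℝ) :
    Continuous (gaussDensity R) :=
  continuous_const.mul (Real.continuous_exp.comp (continuous_const.mul (continuous_quadForm R⁻¹)))

/-- For a symmetric positive definite matrix `R`, an index `i₀`, and Borel sets `A_i ⊆ ℝ`
(for `i ≠ i₀`), the function
`λ ↦ ∫_{ℝ^k} 1_{(−∞,−λ)}(x_{i₀}) ∏_{i≠i₀} 1_{A_i}(x_i) φ_R(x) dx`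
is differentiable on `ℝ`, with derivative at `λ` equal to
`−∫_{ℝ^{k−1}} ∏_{i≠i₀} 1_{A_i}(x_i) φ_R(x₁,…,−λ,…,x_k) dx̄`. -/
theorem stmt8 (k : ℕ) (R : Matrix (Fin k) (Fin k) ℝ) (hsymm : R.IsSymm) (hpd : R.PosDef)
    (i₀ : Fin k) (A : Fin k → Set ℝ) (hA : ∀ i, MeasurableSet (A i)) (l : ℝ) :
    HasDerivAt
      (fun l : ℝ =>
        ∫ x : Fin k → ℝ,
          Set.indicator (Set.Iio (-l)) (fun _ => (1 : ℝ)) (x i₀) *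
            (∏ i ∈ Finset.univ.erase i₀, Set.indicator (A i) (fun _ => (1 : ℝ)) (x i)) *
            gaussDensity R x)
      (-(∫ xb : {i : Fin k // i ≠ i₀} → ℝ,
          (∏ i : {i : Fin k // i ≠ i₀}, Set.indicator (A i) (fun _ => (1 : ℝ)) (xb i)) *
            gaussDensity R (fun i => if h : i = i₀ then -l else xb ⟨i, h⟩)))
      l := by
  classical
  have hk : 0 < k := i₀.pos
  obtain ⟨c, hc, hcle⟩ := quad_lower_bound hk hpd.inv
  set C : ℝ := (Real.sqrt ((2 * Real.pi) ^ k * R.det))⁻¹ with hCdef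
  have hC0 : 0 ≤ C := inv_nonneg.mpr (Real.sqrt_nonneg _)
  have hgauss_nonneg : ∀ x, 0 ≤ gaussDensity R x := fun x =>
    mul_nonneg hC0 (Real.exp_pos _).le
  have hgauss_le : ∀ x : Fin k → ℝ,
      gaussDensity R x ≤ C * Real.exp (-(c/2) * ∑ i, x i ^ 2) := by
    intro x
    apply mul_le_mul_of_nonneg_left _ hC0
    apply Real.exp_le_exp.mpr
    have h1 : c * (x ⬝ᵥ x) ≤ x ⬝ᵥ R⁻¹ *ᵥ x := hcle x
    have h2 : x ⬝ᵥ x = ∑ i, x i ^ 2 := by simp [dotProduct, sq]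
    rw [h2] at h1
    linarith
  have hints : Integrable (fun x : Fin k → ℝ => C * Real.exp (-(c/2) * ∑ i, x i ^ 2)) :=
    (integrable_exp_neg_mul_sum_sq (by positivity : (0:ℝ) < c/2)).const_mul C
  have hgauss_int : Integrable (gaussDensity R) := by
    refine hints.mono' (continuous_gaussDensity R).aestronglyMeasurable ?_
    filter_upwards with x
    rw [Real.norm_eq_abs, abs_of_nonneg (hgauss_nonneg x)]
    exact hgauss_le x
  -- the splitting equivalence
  haveI : Unique {i : Fin k // i = i₀} :=
    ⟨⟨⟨i₀, rfl⟩⟩, by rintro ⟨x, rfl⟩; rfl⟩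
  set e : (Fin k → ℝ) ≃ᵐ (ℝ × ({i : Fin k // i ≠ i₀} → ℝ)) :=
    (MeasurableEquiv.piEquivPiSubtypeProd (fun _ : Fin k => ℝ) (fun i => i = i₀)).trans
      ((MeasurableEquiv.funUnique {i : Fin k // i = i₀} ℝ).prodCongr
        (MeasurableEquiv.refl ({i : Fin k // i ≠ i₀} → ℝ))) with hedef
  have he : MeasurePreserving e := by
    have h1 := volume_preserving_piEquivPiSubtypeProd (fun _ : Fin k => ℝ) (fun i => i = i₀)
    have h2 := (volume_preserving_funUnique {i : Fin k // i = i₀} ℝ).prod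
        (MeasurePreserving.id (volume : Measure ({i : Fin k // i ≠ i₀} → ℝ)))
    have h3 := h2.comp (μa := (volume : Measure (Fin k → ℝ)))
      (f := ⇑(MeasurableEquiv.piEquivPiSubtypeProd (fun _ : Fin k => ℝ) (fun i => i = i₀))) ?_
    · exact h3
    · convert h1 using 2
      rfl
      rw [Measure.volume_eq_prod]
      congr!
  have he' : MeasurePreserving e.symm := he.symm e
  have hesymm : ∀ (t : ℝ) (xb : {i : Fin k // i ≠ i₀} → ℝ),
      e.symm (t, xb) = fun i => if h : i = i₀ then t else xb ⟨i, h⟩ := by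
    intro t xb
    rfl
  -- product of indicators over the subtype
  set P : ({i : Fin k // i ≠ i₀} → ℝ) → ℝ :=
    fun xb => ∏ i : {i : Fin k // i ≠ i₀}, Set.indicator (A i) (fun _ => (1:ℝ)) (xb i) with hPdef
  have hP0 : ∀ xb, 0 ≤ P xb := fun xb =>
    Finset.prod_nonneg fun i _ => Set.indicator_nonneg (fun _ _ => zero_le_one) _
  have hP1 : ∀ xb, P xb ≤ 1 := fun xb =>
    Finset.prod_le_one (fun i _ => Set.indicator_nonneg (fun _ _ => zero_le_one) _)
      (fun i _ => by rw [Set.indicator_apply]; split <;> norm_num)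
  have hPmeas : Measurable P :=
    Finset.measurable_prod _ fun i _ =>
      (measurable_const.indicator (hA i)).comp (measurable_pi_apply i)
  set g : ℝ → ({i : Fin k // i ≠ i₀} → ℝ) → ℝ :=
    fun t xb => P xb * gaussDensity R (e.symm (t, xb)) with hgdef
  have hgmeas : ∀ t, Measurable (g t) := fun t =>
    hPmeas.mul ((continuous_gaussDensity R).measurable.comp
      (e.symm.measurable.comp (measurable_const.prodMk measurable_id)))
  have hg_nonneg : ∀ t xb, 0 ≤ g t xb := fun t xb =>
    mul_nonneg (hP0 xb) (hgauss_nonneg _)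
  have hsum_le : ∀ (t : ℝ) (xb : {i : Fin k // i ≠ i₀} → ℝ),
      (∑ i : {i : Fin k // i ≠ i₀}, xb i ^ 2) ≤ ∑ i, (e.symm (t, xb)) i ^ 2 := by
    intro t xb
    have h1 : ∀ i : {i : Fin k // i ≠ i₀}, (e.symm (t, xb)) (i : Fin k) = xb i := by
      intro i; rw [hesymm]; exact dif_neg i.2
    calc (∑ i : {i : Fin k // i ≠ i₀}, xb i ^ 2)
        = ∑ i : {i : Fin k // i ≠ i₀}, (e.symm (t, xb)) (i : Fin k) ^ 2 :=
          Finset.sum_congr rfl fun i _ => by rw [h1 i]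
      _ = ∑ i ∈ Finset.univ.erase i₀, (e.symm (t, xb)) i ^ 2 :=
          (Finset.sum_subtype (Finset.univ.erase i₀)
            (fun x => by simp [Finset.mem_erase]) fun i => (e.symm (t, xb)) i ^ 2).symm
      _ ≤ ∑ i, (e.symm (t, xb)) i ^ 2 :=
          Finset.sum_le_sum_of_subset_of_nonneg (Finset.subset_univ _)
            (fun i _ _ => sq_nonneg _)
  set bnd : ({i : Fin k // i ≠ i₀} → ℝ) → ℝ :=
    fun xb => C * Real.exp (-(c/2) * ∑ i : {i : Fin k // i ≠ i₀}, xb i ^ 2) with hbnddef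
  have hbnd_int : Integrable bnd :=
    (integrable_exp_neg_mul_sum_sq (by positivity : (0:ℝ) < c/2)).const_mul C
  have hg_le_bnd : ∀ t xb, ‖g t xb‖ ≤ bnd xb := by
    intro t xb
    rw [Real.norm_eq_abs, abs_of_nonneg (hg_nonneg t xb)]
    calc g t xb ≤ 1 * gaussDensity R (e.symm (t, xb)) :=
          mul_le_mul_of_nonneg_right (hP1 xb) (hgauss_nonneg _)
      _ = gaussDensity R (e.symm (t, xb)) := one_mul _
      _ ≤ C * Real.exp (-(c/2) * ∑ i, (e.symm (t, xb)) i ^ 2) := hgauss_le _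
      _ ≤ bnd xb := by
          apply mul_le_mul_of_nonneg_left _ hC0
          apply Real.exp_le_exp.mpr
          have h := hsum_le t xb
          nlinarith
  have hgauss_comp_int :
      Integrable (fun p : ℝ × ({i : Fin k // i ≠ i₀} → ℝ) => gaussDensity R (e.symm p)) := by
    have h := (he'.integrable_comp_emb e.symm.measurableEmbedding
      (g := gaussDensity R)).mpr hgauss_int
    simpa [Function.comp_def] using h
  have hgprod_int : Integrable (fun p : ℝ × ({i : Fin k // i ≠ i₀} → ℝ) => g p.1 p.2) := by
    refine hgauss_comp_int.mono' ?_ ?_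
    · exact ((hPmeas.comp measurable_snd).mul
        ((continuous_gaussDensity R).measurable.comp e.symm.measurable)).aestronglyMeasurable
    · filter_upwards with p
      rw [Real.norm_eq_abs, abs_of_nonneg (hg_nonneg p.1 p.2)]
      exact mul_le_of_le_one_left (hgauss_nonneg _) (hP1 p.2)
  set G : ℝ → ℝ := fun t => ∫ xb, g t xb with hGdef
  have hGint : Integrable G := hgprod_int.integral_prod_left
  have hGcont : Continuous G := by
    refine continuous_of_dominated (fun t => (hgmeas t).aestronglyMeasurable)
      (fun t => ?_) hbnd_int ?_
    · filter_upwards with xb; exact hg_le_bnd t xb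
    · filter_upwards with xb
      have hcs : Continuous fun t : ℝ => e.symm (t, xb) := by
        have hfe : (fun t : ℝ => e.symm (t, xb))
            = fun t => (fun i => if h : i = i₀ then t else xb ⟨i, h⟩) :=
          funext fun t => hesymm t xb
        rw [hfe]
        refine continuous_pi fun i => ?_
        by_cases h : i = i₀
        · simp only [dif_pos h]; exact continuous_id
        · simp only [dif_neg h]; exact continuous_const
      exact continuous_const.mul ((continuous_gaussDensity R).comp hcs)
  have key : ∀ l' : ℝ,
      (∫ x : Fin k → ℝ,
        Set.indicator (Set.Iio (-l')) (fun _ => (1 : ℝ)) (x i₀) *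
          (∏ i ∈ Finset.univ.erase i₀, Set.indicator (A i) (fun _ => (1 : ℝ)) (x i)) *
          gaussDensity R x)
      = ∫ t in Set.Iio (-l'), G t := by
    intro l'
    have hF : ∀ p : ℝ × ({i : Fin k // i ≠ i₀} → ℝ),
        (Set.indicator (Set.Iio (-l')) (fun _ => (1 : ℝ)) ((e.symm p) i₀) *
          (∏ i ∈ Finset.univ.erase i₀, Set.indicator (A i) (fun _ => (1 : ℝ)) ((e.symm p) i)) *
          gaussDensity R (e.symm p))
        = Set.indicator (Set.Iio (-l')) (fun _ => (1 : ℝ)) p.1 * (g p.1 p.2) := by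
      rintro ⟨t, xb⟩
      have h0 : (e.symm (t, xb)) i₀ = t := by rw [hesymm]; exact dif_pos rfl
      have h1 : ∀ i : {i : Fin k // i ≠ i₀}, (e.symm (t, xb)) (i : Fin k) = xb i := by
        intro i; rw [hesymm]; exact dif_neg i.2
      have h2 : (∏ i ∈ Finset.univ.erase i₀,
          Set.indicator (A i) (fun _ => (1:ℝ)) ((e.symm (t, xb)) i)) = P xb := by
        rw [Finset.prod_subtype (p := fun i => i ≠ i₀) (Finset.univ.erase i₀)
          (fun x => by simp [Finset.mem_erase])
          (fun i => Set.indicator (A i) (fun _ => (1:ℝ)) ((e.symm (t, xb)) i))]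
        exact Finset.prod_congr rfl fun i _ => by rw [h1 i]
      rw [h0, h2]
      simp only [hgdef]
      ring
    rw [← he'.integral_comp e.symm.measurableEmbedding]
    rw [integral_congr_ae (Filter.Eventually.of_forall hF)]
    have hint2 : Integrable (fun p : ℝ × ({i : Fin k // i ≠ i₀} → ℝ) =>
        Set.indicator (Set.Iio (-l')) (fun _ => (1:ℝ)) p.1 * g p.1 p.2) := by
      refine hgauss_comp_int.mono' ?_ ?_
      · exact (((measurable_const.indicator measurableSet_Iio).comp measurable_fst).mul
          ((hPmeas.comp measurable_snd).mul
            ((continuous_gaussDensity R).measurable.comp e.symm.measurable))).aestronglyMeasurable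
      · filter_upwards with p
        have hind0 : (0:ℝ) ≤ Set.indicator (Set.Iio (-l')) (fun _ => (1:ℝ)) p.1 :=
          Set.indicator_nonneg (fun _ _ => zero_le_one) _
        have hind1 : Set.indicator (Set.Iio (-l')) (fun _ => (1:ℝ)) p.1 ≤ 1 := by
          rw [Set.indicator_apply]; split <;> norm_num
        rw [Real.norm_eq_abs, abs_of_nonneg (mul_nonneg hind0 (hg_nonneg p.1 p.2))]
        calc Set.indicator (Set.Iio (-l')) (fun _ => (1:ℝ)) p.1 * g p.1 p.2
            ≤ 1 * g p.1 p.2 := mul_le_mul_of_nonneg_right hind1 (hg_nonneg p.1 p.2)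
          _ = g p.1 p.2 := one_mul _
          _ ≤ gaussDensity R (e.symm (p.1, p.2)) :=
              mul_le_of_le_one_left (hgauss_nonneg _) (hP1 p.2)
    rw [Measure.volume_eq_prod, integral_prod _ hint2]
    have hinner : ∀ t : ℝ, (∫ xb, Set.indicator (Set.Iio (-l')) (fun _ => (1:ℝ)) t * g t xb)
        = Set.indicator (Set.Iio (-l')) G t := by
      intro t
      rw [integral_const_mul]
      by_cases h : t ∈ Set.Iio (-l')
      · simp [Set.indicator_of_mem h, hGdef]
      · simp [Set.indicator_of_notMem h]
    rw [integral_congr_ae (Filter.Eventually.of_forall hinner)]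
    exact integral_indicator measurableSet_Iio
  -- rewrite as an interval integral and differentiate
  have key2 : ∀ l' : ℝ, (∫ t in Set.Iio (-l'), G t)
      = (∫ t in Set.Iio (0:ℝ), G t) + ∫ t in (0:ℝ)..(-l'), G t := by
    intro l'
    have h0 : (∫ t in Set.Iio (0:ℝ), G t) = ∫ t in Set.Iic (0:ℝ), G t :=
      setIntegral_congr_set Iio_ae_eq_Iic
    have h1 : (∫ t in Set.Iio (-l'), G t) = ∫ t in Set.Iic (-l'), G t :=
      setIntegral_congr_set Iio_ae_eq_Iic
    rw [h0, h1, ← intervalIntegral.integral_Iic_sub_Iic hGint.integrableOn hGint.integrableOn]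
    ring
  have hfun : (fun l : ℝ =>
      ∫ x : Fin k → ℝ,
        Set.indicator (Set.Iio (-l)) (fun _ => (1 : ℝ)) (x i₀) *
          (∏ i ∈ Finset.univ.erase i₀, Set.indicator (A i) (fun _ => (1 : ℝ)) (x i)) *
          gaussDensity R x)
      = (fun u : ℝ => (∫ t in Set.Iio (0:ℝ), G t) + ∫ t in (0:ℝ)..u, G t) ∘ (fun l' : ℝ => -l') :=
    funext fun l' => (key l').trans (key2 l')
  have hH : HasDerivAt (fun u : ℝ => (∫ t in Set.Iio (0:ℝ), G t) + ∫ t in (0:ℝ)..u, G t)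
      (G (-l)) (-l) := by
    refine HasDerivAt.const_add _ ?_
    exact intervalIntegral.integral_hasDerivAt_right (hGint.intervalIntegrable)
      (hGcont.stronglyMeasurableAtFilter _ _) hGcont.continuousAt
  have hneg : HasDerivAt (fun l' : ℝ => -l') (-1) l := (hasDerivAt_id l).neg
  have hcomp := hH.comp l hneg
  have hval : (∫ xb : {i : Fin k // i ≠ i₀} → ℝ,
      (∏ i : {i : Fin k // i ≠ i₀}, Set.indicator (A i) (fun _ => (1 : ℝ)) (xb i)) *
        gaussDensity R (fun i => if h : i = i₀ then -l else xb ⟨i, h⟩)) = G (-l) := by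
    simp only [hGdef]
    refine integral_congr_ae (Filter.Eventually.of_forall fun xb => ?_)
    simp only [hgdef, hPdef]
    rw [hesymm]
  rw [hfun, show (-(∫ xb : {i : Fin k // i ≠ i₀} → ℝ,
      (∏ i : {i : Fin k // i ≠ i₀}, Set.indicator (A i) (fun _ => (1 : ℝ)) (xb i)) *
        gaussDensity R (fun i => if h : i = i₀ then -l else xb ⟨i, h⟩))) = G (-l) * -1 by
    rw [hval]; ring]
  exact hcomp
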